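/- The universal triangular cover of a connected graph is unique up to graph isomorphism: if p : G̃ → G and q : Ḡ → G are triangular covering maps with G̃ and Ḡ both triangularly simply connected, then G̃ ≅ Ḡ. -/

import Mathlib

open SimpleGraph

/-- The closed neighbourhood of a vertex. -/
def closedNbhd {V : Type*} (G : SimpleGraph V) (v : V) : Set V := insert v (G.neighborSet v)

/-- A triangular covering map: a graph homomorphism between connected graphs whose
restriction to each closed neighbourhood is an isomorphism onto the closed
neighbourhood of the image vertex. -/
structure IsTriangularCover {V' V : Type*} {G' : SimpleGraph V'} {G : SimpleGraph V}
    (p : G' →g G) : Prop where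
  connDom : G'.Connected
  connCod : G.Connected
  injOn : ∀ v : V', Set.InjOn p (closedNbhd G' v)
  surjOn : ∀ v : V', Set.SurjOn p (closedNbhd G' v) (closedNbhd G (p v))
  reflectAdj : ∀ v x y : V', x ∈ closedNbhd G' v → y ∈ closedNbhd G' v →
    G.Adj (p x) (p y) → G'.Adj x y

/-- Elementary moves on walks (recorded as lists of vertices): triangle
removal/insertion and dead end removal/insertion. -/
inductive ElemMove {V : Type*} (G : SimpleGraph V) : List V → List V → Prop
  | triRemove (l₁ l₂ : List V) (a b c : V) (h₁ : G.Adj a b) (h₂ : G.Adj b c) (h₃ : G.Adj a c) :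
      ElemMove G (l₁ ++ a :: b :: c :: l₂) (l₁ ++ a :: c :: l₂)
  | triInsert (l₁ l₂ : List V) (a b c : V) (h₁ : G.Adj a b) (h₂ : G.Adj b c) (h₃ : G.Adj a c) :
      ElemMove G (l₁ ++ a :: c :: l₂) (l₁ ++ a :: b :: c :: l₂)
  | deadEndRemove (l₁ l₂ : List V) (a b : V) (h : G.Adj a b) :
      ElemMove G (l₁ ++ a :: b :: a :: l₂) (l₁ ++ a :: l₂)
  | deadEndInsert (l₁ l₂ : List V) (a b : V) (h : G.Adj a b) :
      ElemMove G (l₁ ++ a :: l₂) (l₁ ++ a :: b :: a :: l₂)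

/-- Two walks are homotopic if one can be transformed into the other by a finite
sequence of elementary moves. -/
def Homotopic {V : Type*} (G : SimpleGraph V) : List V → List V → Prop :=
  Relation.ReflTransGen (ElemMove G)

/-- A graph is triangularly simply connected if it is connected and every closed walk
is homotopic to a trivial walk. -/
def TriSimplyConnected {V : Type*} (G : SimpleGraph V) : Prop :=
  G.Connected ∧ ∀ (v : V) (l : List V), (v :: l).Chain' G.Adj →
    (v :: l).getLast (List.cons_ne_nil v l) = v → Homotopic G (v :: l) [v]

section Aux

open List

variable {V' V'' V : Type*} {G' : SimpleGraph V'} {G'' : SimpleGraph V''} {G : SimpleGraph V}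

lemma mem_closedNbhd_self (G : SimpleGraph V) (v : V) : v ∈ closedNbhd G v :=
  Set.mem_insert _ _

lemma adj_mem_closedNbhd {v w : V} (h : G.Adj v w) : w ∈ closedNbhd G v :=
  Set.mem_insert_of_mem _ h

lemma chain'_mid {α : Type*} {R : α → α → Prop} {l₁ l₂ l₃ : List α} {a : α}
    (h : (l₁ ++ a :: l₂).Chain' R) (h₂ : (a :: l₃).Chain' R) :
    (l₁ ++ a :: l₃).Chain' R := by
  unfold List.Chain' at h h₂ ⊢
  rw [List.isChain_append] at h ⊢
  exact ⟨h.1, h₂, by simpa using h.2.2⟩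

lemma chain'_reverse_adj {l : List V} (h : l.Chain' G.Adj) : l.reverse.Chain' G.Adj := by
  unfold List.Chain' at h ⊢
  rw [List.isChain_reverse]
  exact h.imp fun _ _ hab => hab.symm

lemma ElemMove.chain'_of {l m : List V} (h : ElemMove G l m) (hl : l.Chain' G.Adj) :
    m.Chain' G.Adj := by
  cases h with
  | triRemove l₁ l₂ a b c h₁ h₂ h₃ =>
      have hx : (a :: b :: c :: l₂).Chain' G.Adj := (List.isChain_append.mp hl).2.1
      exact chain'_mid hl (List.isChain_cons_cons.mpr
        ⟨h₃, (List.isChain_cons_cons.mp (List.isChain_cons_cons.mp hx).2).2⟩)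
  | triInsert l₁ l₂ a b c h₁ h₂ h₃ =>
      have hx : (a :: c :: l₂).Chain' G.Adj := (List.isChain_append.mp hl).2.1
      exact chain'_mid hl (List.isChain_cons_cons.mpr ⟨h₁, List.isChain_cons_cons.mpr
        ⟨h₂, (List.isChain_cons_cons.mp hx).2⟩⟩)
  | deadEndRemove l₁ l₂ a b h =>
      have hx : (a :: b :: a :: l₂).Chain' G.Adj := (List.isChain_append.mp hl).2.1
      exact chain'_mid hl (List.isChain_cons_cons.mp (List.isChain_cons_cons.mp hx).2).2
  | deadEndInsert l₁ l₂ a b h =>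
      have hx : (a :: l₂).Chain' G.Adj := (List.isChain_append.mp hl).2.1
      exact chain'_mid hl (List.isChain_cons_cons.mpr ⟨h, List.isChain_cons_cons.mpr
        ⟨h.symm, hx⟩⟩)

lemma ElemMove.head?_eq {l m : List V} (h : ElemMove G l m) : l.head? = m.head? := by
  cases h with
  | triRemove l₁ l₂ a b c h₁ h₂ h₃ => cases l₁ <;> simp
  | triInsert l₁ l₂ a b c h₁ h₂ h₃ => cases l₁ <;> simp
  | deadEndRemove l₁ l₂ a b h => cases l₁ <;> simp
  | deadEndInsert l₁ l₂ a b h => cases l₁ <;> simp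

lemma ElemMove.getLast?_eq {l m : List V} (h : ElemMove G l m) : l.getLast? = m.getLast? := by
  cases h <;> simp [List.getLast?_append_cons, List.getLast?_cons_cons]

lemma ElemMove.map_hom {l m : List V'} (f : G' →g G) (h : ElemMove G' l m) :
    ElemMove G (l.map f) (m.map f) := by
  cases h with
  | triRemove l₁ l₂ a b c h₁ h₂ h₃ =>
      simpa using ElemMove.triRemove (G := G) (l₁.map f) (l₂.map f) (f a) (f b) (f c)
        (f.map_adj h₁) (f.map_adj h₂) (f.map_adj h₃)
  | triInsert l₁ l₂ a b c h₁ h₂ h₃ =>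
      simpa using ElemMove.triInsert (G := G) (l₁.map f) (l₂.map f) (f a) (f b) (f c)
        (f.map_adj h₁) (f.map_adj h₂) (f.map_adj h₃)
  | deadEndRemove l₁ l₂ a b h =>
      simpa using ElemMove.deadEndRemove (G := G) (l₁.map f) (l₂.map f) (f a) (f b)
        (f.map_adj h)
  | deadEndInsert l₁ l₂ a b h =>
      simpa using ElemMove.deadEndInsert (G := G) (l₁.map f) (l₂.map f) (f a) (f b)
        (f.map_adj h)

lemma Homotopic.map_hom {l m : List V'} (f : G' →g G) (h : Homotopic G' l m) :
    Homotopic G (l.map f) (m.map f) :=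
  Relation.ReflTransGen.lift (List.map f) (fun a b (e : ElemMove G' a b) => e.map_hom f) _ _ h

lemma Homotopic.head?_eq {l m : List V} (h : Homotopic G l m) : l.head? = m.head? := by
  induction h with
  | refl => rfl
  | tail _ e ih => exact ih.trans e.head?_eq

lemma Homotopic.getLast?_eq {l m : List V} (h : Homotopic G l m) : l.getLast? = m.getLast? := by
  induction h with
  | refl => rfl
  | tail _ e ih => exact ih.trans e.getLast?_eq

lemma Homotopic.chain'_of {l m : List V} (h : Homotopic G l m) (hl : l.Chain' G.Adj) :
    m.Chain' G.Adj := by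
  induction h with
  | refl => exact hl
  | tail _ e ih => exact e.chain'_of ih

variable (q : G'' →g G)

lemma cover_step (hq : IsTriangularCover q) {x : V''} {b : V} (h : G.Adj (q x) b) :
    ∃ y, G''.Adj x y ∧ q y = b := by
  obtain ⟨y, hy, hqy⟩ := hq.surjOn x (Set.mem_insert_of_mem _ h)
  exact ⟨y, hq.reflectAdj x x y (mem_closedNbhd_self _ _) hy
    (by rw [hqy]; exact h), hqy⟩

lemma lift_exists (hq : IsTriangularCover q) (l : List V) :
    ∀ x : V'', (q x :: l).Chain' G.Adj →
    ∃ m : List V'', (x :: m).Chain' G''.Adj ∧ m.map q = l := by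
  induction l with
  | nil => exact fun x _ => ⟨[], List.isChain_singleton x, rfl⟩
  | cons b t ih =>
      intro x h
      have hadj : G.Adj (q x) b := (List.isChain_cons_cons.mp h).1
      obtain ⟨y, hxy, hqy⟩ := cover_step q hq hadj
      obtain ⟨m, hm, hmap⟩ := ih y (by rw [hqy]; exact (List.isChain_cons_cons.mp h).2)
      exact ⟨y :: m, List.isChain_cons_cons.mpr ⟨hxy, hm⟩, by simp [hqy, hmap]⟩

lemma lift_unique (hq : IsTriangularCover q) :
    ∀ l m : List V'', l.Chain' G''.Adj → m.Chain' G''.Adj →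
    l.head? = m.head? → l.map q = m.map q → l = m := by
  intro l
  induction l with
  | nil =>
      intro m _ _ _ hmap
      cases m with
      | nil => rfl
      | cons y s => simp at hmap
  | cons x t ih =>
      intro m hc hmc hh hmap
      cases m with
      | nil => simp at hmap
      | cons y s =>
          obtain rfl : x = y := by simpa using hh
          cases t with
          | nil =>
              cases s with
              | nil => rfl
              | cons z s' => simp at hmap
          | cons x' t' =>
              cases s with
              | nil => simp at hmap
              | cons y' s' =>
                  have hq1 : q x' = q y' ∧ List.map q t' = List.map q s' := by
                    simpa using hmap
                  have hx' : G''.Adj x x' := (List.isChain_cons_cons.mp hc).1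
                  have hy' : G''.Adj x y' := (List.isChain_cons_cons.mp hmc).1
                  obtain rfl : x' = y' :=
                    hq.injOn x (adj_mem_closedNbhd hx') (adj_mem_closedNbhd hy') hq1.1
                  have := ih (x' :: s') (List.isChain_cons_cons.mp hc).2
                    (List.isChain_cons_cons.mp hmc).2 rfl (by simpa using hq1.2)
                  rw [this]

lemma lift_move (hq : IsTriangularCover q) {l m : List V} (e : ElemMove G l m) :
    ∀ {l'' : List V''}, l''.Chain' G''.Adj → l''.map q = l →
    ∃ m'', ElemMove G'' l'' m'' ∧ m''.map q = m := by
  cases e with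
  | triRemove l₁ l₂ a b c h₁ h₂ h₃ =>
      intro l'' hc hmap
      obtain ⟨m₁, rest, rfl, hm₁, hrest⟩ := List.map_eq_append_iff.mp hmap
      obtain ⟨x, rest', rfl, hx, hrest'⟩ := List.map_eq_cons_iff.mp hrest
      obtain ⟨y, rest'', rfl, hy, hrest''⟩ := List.map_eq_cons_iff.mp hrest'
      obtain ⟨z, m₂, rfl, hz, hm₂⟩ := List.map_eq_cons_iff.mp hrest''
      have hch : (x :: y :: z :: m₂).Chain' G''.Adj := (List.isChain_append.mp hc).2.1
      have hxy : G''.Adj x y := (List.isChain_cons_cons.mp hch).1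
      have hyz : G''.Adj y z := (List.isChain_cons_cons.mp (List.isChain_cons_cons.mp hch).2).1
      have hxz : G''.Adj x z := hq.reflectAdj y x z (adj_mem_closedNbhd hxy.symm)
        (adj_mem_closedNbhd hyz) (by rw [hx, hz]; exact h₃)
      exact ⟨m₁ ++ x :: z :: m₂, ElemMove.triRemove _ _ _ _ _ hxy hyz hxz,
        by simp [hm₁, hx, hz, hm₂]⟩
  | triInsert l₁ l₂ a b c h₁ h₂ h₃ =>
      intro l'' hc hmap
      obtain ⟨m₁, rest, rfl, hm₁, hrest⟩ := List.map_eq_append_iff.mp hmap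
      obtain ⟨x, rest', rfl, hx, hrest'⟩ := List.map_eq_cons_iff.mp hrest
      obtain ⟨z, m₂, rfl, hz, hm₂⟩ := List.map_eq_cons_iff.mp hrest'
      have hch : (x :: z :: m₂).Chain' G''.Adj := (List.isChain_append.mp hc).2.1
      have hxz : G''.Adj x z := (List.isChain_cons_cons.mp hch).1
      obtain ⟨y, hxy, hqy⟩ := cover_step q hq (show G.Adj (q x) b by rw [hx]; exact h₁)
      have hyz : G''.Adj y z := hq.reflectAdj x y z (adj_mem_closedNbhd hxy)
        (adj_mem_closedNbhd hxz) (by rw [hqy, hz]; exact h₂)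
      exact ⟨m₁ ++ x :: y :: z :: m₂, ElemMove.triInsert _ _ _ _ _ hxy hyz hxz,
        by simp [hm₁, hx, hz, hm₂, hqy]⟩
  | deadEndRemove l₁ l₂ a b h =>
      intro l'' hc hmap
      obtain ⟨m₁, rest, rfl, hm₁, hrest⟩ := List.map_eq_append_iff.mp hmap
      obtain ⟨x, rest', rfl, hx, hrest'⟩ := List.map_eq_cons_iff.mp hrest
      obtain ⟨y, rest'', rfl, hy, hrest''⟩ := List.map_eq_cons_iff.mp hrest'
      obtain ⟨x', m₂, rfl, hx', hm₂⟩ := List.map_eq_cons_iff.mp hrest''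
      have hch : (x :: y :: x' :: m₂).Chain' G''.Adj := (List.isChain_append.mp hc).2.1
      have hxy : G''.Adj x y := (List.isChain_cons_cons.mp hch).1
      have hyx' : G''.Adj y x' := (List.isChain_cons_cons.mp (List.isChain_cons_cons.mp hch).2).1
      obtain rfl : x = x' := hq.injOn y (adj_mem_closedNbhd hxy.symm)
        (adj_mem_closedNbhd hyx') (by rw [hx, hx'])
      exact ⟨m₁ ++ x :: m₂, ElemMove.deadEndRemove _ _ _ _ hxy, by simp [hm₁, hx, hm₂]⟩
  | deadEndInsert l₁ l₂ a b h =>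
      intro l'' hc hmap
      obtain ⟨m₁, rest, rfl, hm₁, hrest⟩ := List.map_eq_append_iff.mp hmap
      obtain ⟨x, m₂, rfl, hx, hm₂⟩ := List.map_eq_cons_iff.mp hrest
      obtain ⟨y, hxy, hqy⟩ := cover_step q hq (show G.Adj (q x) b by rw [hx]; exact h)
      exact ⟨m₁ ++ x :: y :: x :: m₂, ElemMove.deadEndInsert _ _ _ _ hxy,
        by simp [hm₁, hx, hm₂, hqy]⟩

lemma lift_homotopic (hq : IsTriangularCover q) {l m : List V} (h : Homotopic G l m) :
    ∀ {l'' : List V''}, l''.Chain' G''.Adj → l''.map q = l →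
    ∃ m'', Homotopic G'' l'' m'' ∧ m''.map q = m := by
  induction h with
  | refl => exact fun _ hm => ⟨_, Relation.ReflTransGen.refl, hm⟩
  | tail _ e ih =>
      intro l'' hc hm
      obtain ⟨m'', hh, hmm⟩ := ih hc hm
      obtain ⟨k, he, hk⟩ := lift_move q hq e (hh.chain'_of hc) hmm
      exact ⟨k, hh.tail he, hk⟩

lemma cover_surj (hq : IsTriangularCover q) (b : V) : ∃ x, q x = b := by
  obtain ⟨x₀⟩ := hq.connDom.nonempty
  obtain ⟨w⟩ := hq.connCod.preconnected (q x₀) b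
  obtain ⟨m, hm, hmap⟩ := lift_exists q hq w.support.tail x₀
    (by rw [← w.support_eq_cons]; exact w.isChain_adj_support)
  refine ⟨(x₀ :: m).getLast (List.cons_ne_nil _ _), ?_⟩
  have h1 : (List.map q (x₀ :: m)).getLast? = some b := by
    rw [show List.map q (x₀ :: m) = w.support by
      rw [List.map_cons, hmap, ← w.support_eq_cons]]
    rw [List.getLast?_eq_getLast w.support_ne_nil, w.getLast_support]
  rw [List.getLast?_map, List.getLast?_eq_getLast (List.cons_ne_nil _ _)] at h1
  simpa using h1

end Aux

/-- The correspondence relation between the two covers, via pairs of walks with equal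
projections. -/
def Corr {V' V'' V : Type*} (G' : SimpleGraph V') (G'' : SimpleGraph V'')
    (p : V' → V) (q : V'' → V) (v₀' : V') (v₀'' : V'') (v : V') (x : V'') : Prop :=
  ∃ (l' : List V') (l'' : List V''), l'.Chain' G'.Adj ∧ l''.Chain' G''.Adj ∧
    l'.head? = some v₀' ∧ l''.head? = some v₀'' ∧
    l'.getLast? = some v ∧ l''.getLast? = some x ∧ l'.map p = l''.map q

section Corr

variable {V' V'' V : Type*} {G' : SimpleGraph V'} {G'' : SimpleGraph V''} {G : SimpleGraph V}

lemma corr_swap {p : V' → V} {q : V'' → V} {v₀' : V'} {v₀'' : V''} {v : V'} {x : V''}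
    (h : Corr G' G'' p q v₀' v₀'' v x) : Corr G'' G' q p v₀'' v₀' x v := by
  obtain ⟨l', l'', h1, h2, h3, h4, h5, h6, h7⟩ := h
  exact ⟨l'', l', h2, h1, h4, h3, h6, h5, h7.symm⟩

lemma corr_total (p : G' →g G) (q : G'' →g G) (hconn : G'.Connected)
    (hq : IsTriangularCover q) {v₀' : V'} {v₀'' : V''} (hb : q v₀'' = p v₀') (v : V') :
    ∃ x, Corr G' G'' p q v₀' v₀'' v x := by
  obtain ⟨w⟩ := hconn.preconnected v₀' v
  have hc' : (List.map p w.support).Chain' G.Adj :=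
    (List.isChain_map ⇑p).mpr (w.isChain_adj_support.imp fun _ _ h => p.map_adj h)
  obtain ⟨m, hm, hmap⟩ := lift_exists q hq (List.map p w.support.tail) v₀''
    (by rw [hb, ← List.map_cons, ← w.support_eq_cons]; exact hc')
  refine ⟨(v₀'' :: m).getLast (List.cons_ne_nil _ _),
    w.support, v₀'' :: m, w.isChain_adj_support, hm, ?_, rfl, ?_, ?_, ?_⟩
  · rw [List.head?_eq_head w.support_ne_nil, w.head_support]
  · rw [List.getLast?_eq_getLast w.support_ne_nil, w.getLast_support]
  · exact List.getLast?_eq_getLast _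
  · rw [List.map_cons, hmap, hb, ← List.map_cons, ← w.support_eq_cons]

lemma corr_adj (p : G' →g G) (q : G'' →g G) (hq : IsTriangularCover q)
    {v₀' : V'} {v₀'' : V''} {v w : V'} {x : V''} (ha : G'.Adj v w)
    (h : Corr G' G'' p q v₀' v₀'' v x) :
    ∃ y, G''.Adj x y ∧ Corr G' G'' p q v₀' v₀'' w y := by
  obtain ⟨l', l'', c, c', hh, hh', hl, hl', he⟩ := h
  have hqx : q x = p v := by
    have h1 : (l''.map q).getLast? = some (q x) := by rw [List.getLast?_map, hl']; rfl
    have h2 : (l'.map p).getLast? = some (p v) := by rw [List.getLast?_map, hl]; rfl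
    rw [← he, h2] at h1
    exact (Option.some_injective _ h1).symm
  obtain ⟨y, hxy, hqy⟩ := cover_step q hq (show G.Adj (q x) (p w) by
    rw [hqx]; exact p.map_adj ha)
  refine ⟨y, hxy, l' ++ [w], l'' ++ [y], ?_, ?_, ?_, ?_, ?_, ?_, ?_⟩
  · refine List.isChain_append.mpr ⟨c, List.isChain_singleton _, ?_⟩
    intro a ha' b hb'
    obtain rfl : v = a := by rw [hl] at ha'; exact Option.some_injective _ ha'
    obtain rfl : w = b := by simpa using hb'
    exact ha
  · refine List.isChain_append.mpr ⟨c', List.isChain_singleton _, ?_⟩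
    intro a ha' b hb'
    obtain rfl : x = a := by rw [hl'] at ha'; exact Option.some_injective _ ha'
    obtain rfl : y = b := by simpa using hb'
    exact hxy
  · rw [List.head?_append, hh]; rfl
  · rw [List.head?_append, hh']; rfl
  · exact List.getLast?_concat
  · exact List.getLast?_concat
  · simp [he, hqy]

lemma corr_funct (p : G' →g G) (q : G'' →g G) (hq : IsTriangularCover q)
    (hsc' : TriSimplyConnected G') {v₀' : V'} {v₀'' : V''}
    (hb : q v₀'' = p v₀') {v : V'} {x y : V''}
    (h1 : Corr G' G'' p q v₀' v₀'' v x) (h2 : Corr G' G'' p q v₀' v₀'' v y) : x = y := by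
  obtain ⟨l₁', l₁'', c1, c1', hh1, hh1', hl1, hl1', he1⟩ := h1
  obtain ⟨l₂', l₂'', c2, c2', hh2, hh2', hl2, hl2', he2⟩ := h2
  -- the reverse of the second downstairs walk starts at v
  obtain ⟨t', ht'⟩ : ∃ t', l₂'.reverse = v :: t' := by
    have h : l₂'.reverse.head? = some v := by rw [List.head?_reverse]; exact hl2
    cases hrev : l₂'.reverse with
    | nil => rw [hrev] at h; simp at h
    | cons a t => rw [hrev] at h; simp at h; exact ⟨t, by rw [h]⟩
  have crev : (v :: t').Chain' G'.Adj := by rw [← ht']; exact chain'_reverse_adj c2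
  -- the closed walk c' in G'
  set c' : List V' := l₁' ++ t' with hc'def
  have hcc' : c'.Chain' G'.Adj := by
    refine List.isChain_append.mpr ⟨c1, (List.isChain_cons.mp crev).2, ?_⟩
    intro a ha b hbm
    obtain rfl : v = a := by rw [hl1] at ha; exact Option.some_injective _ ha
    exact (List.isChain_cons.mp crev).1 b hbm
  have hvt : (v :: t').getLast? = some v₀' := by
    rw [← ht', List.getLast?_reverse, hh2]
  have hclast : c'.getLast? = some v₀' := by
    cases ht'' : t' with
    | nil =>
        rw [ht''] at hvt
        simp at hvt
        rw [hc'def, ht'']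
        simpa [hvt] using hl1
    | cons u t'' =>
        rw [hc'def, ht'', List.getLast?_append_cons]
        rw [ht''] at hvt
        rw [← List.getLast?_cons_cons (a := v), hvt]
  have hchead : c'.head? = some v₀' := by
    rw [hc'def, List.head?_append, hh1]; rfl
  obtain ⟨r, hr⟩ : ∃ r, c' = v₀' :: r := by
    cases hcc : c' with
    | nil => rw [hcc] at hchead; simp at hchead
    | cons a t => rw [hcc] at hchead; simp at hchead; exact ⟨t, by rw [hchead]⟩
  -- simple connectivity: the closed walk is null-homotopic
  have Hup : Homotopic G' (v₀' :: r) [v₀'] := by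
    refine hsc'.2 v₀' r (by rw [← hr]; exact hcc') ?_
    have := hclast
    rw [hr, List.getLast?_eq_getLast (List.cons_ne_nil _ _)] at this
    exact Option.some_injective _ this
  have Hdown : Homotopic G (List.map p c') [p v₀'] := by
    rw [hr]; simpa using Hup.map_hom p
  -- lift the walk c' over q
  have hcmap : (List.map p c').Chain' G.Adj :=
    (List.isChain_map ⇑p).mpr (hcc'.imp fun _ _ h => p.map_adj h)
  obtain ⟨M, hMc, hMmap⟩ := lift_exists q hq (List.map p r) v₀''
    (by rw [hb, ← List.map_cons, ← hr]; exact hcmap)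
  have hLmap : List.map q (v₀'' :: M) = List.map p c' := by
    rw [List.map_cons, hMmap, hb, ← List.map_cons, ← hr]
  -- lift the null-homotopy
  obtain ⟨K, hK, hKmap⟩ := lift_homotopic q hq Hdown hMc hLmap
  have hLlast : (v₀'' :: M).getLast? = some v₀'' := by
    obtain ⟨k, K', rfl, hk, hK'⟩ := List.map_eq_cons_iff.mp hKmap
    obtain rfl : K' = [] := List.map_eq_nil_iff.mp hK'
    have hkh : k = v₀'' := by
      have := hK.head?_eq
      simp at this
      exact this.symm
    rw [hK.getLast?_eq, hkh]
    rfl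
  -- split the lift along l₁''
  have hLsplit : List.map q (v₀'' :: M) = List.map p l₁' ++ List.map p t' := by
    rw [hLmap, hc'def, List.map_append]
  obtain ⟨L₁, L₂, hLeq, hL1, hL2⟩ := List.map_eq_append_iff.mp hLsplit
  have hcL : (L₁ ++ L₂).Chain' G''.Adj := by rw [← hLeq]; exact hMc
  have hL₁ne : L₁ ≠ [] := by
    intro h
    rw [h] at hL1
    have : l₁' = [] := List.map_eq_nil_iff.mp hL1.symm
    rw [this] at hh1; simp at hh1
  have hL₁head : L₁.head? = some v₀'' := by
    cases L₁ with
    | nil => exact absurd rfl hL₁ne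
    | cons a T =>
        have : (v₀'' :: M).head? = some a := by rw [hLeq]; rfl
        simpa using this.symm
  have hL₁eq : L₁ = l₁'' :=
    lift_unique q hq L₁ l₁'' (List.isChain_append.mp hcL).1 c1'
      (hL₁head.trans hh1'.symm) (by rw [hL1, he1])
  have hL₁last : L₁.getLast? = some x := by rw [hL₁eq]; exact hl1'
  -- the second half of the lift, prepended with x
  have hqx : q x = p v := by
    have hx1 : (List.map q l₁'').getLast? = some (q x) := by
      rw [List.getLast?_map, hl1']; rfl
    have hx2 : (List.map p l₁').getLast? = some (p v) := by
      rw [List.getLast?_map, hl1]; rfl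
    rw [← he1, hx2] at hx1
    exact (Option.some_injective _ hx1).symm
  have hmc : (x :: L₂).Chain' G''.Adj := by
    have h := List.isChain_append.mp hcL
    refine List.isChain_cons.mpr ⟨?_, h.2.1⟩
    intro b hbm
    refine h.2.2 x ?_ b hbm
    rw [hL₁last]; rfl
  have hmmap : List.map q (x :: L₂) = (List.map q l₂'').reverse := by
    rw [List.map_cons, hL2, hqx, ← he2, ← List.map_reverse, ht']
    rfl
  have hmlast : (x :: L₂).getLast? = some v₀'' := by
    cases hL₂ : L₂ with
    | nil =>
        rw [hL₂] at hLeq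
        rw [← hLlast, hLeq]
        simp [← hL₁last]
    | cons b T =>
        rw [hL₂] at hLeq
        rw [List.getLast?_cons_cons, ← List.getLast?_append_cons L₁ b T, ← hLeq]
        exact hLlast
  -- reverse it and compare with l₂''
  have hrevc : (x :: L₂).reverse.Chain' G''.Adj := chain'_reverse_adj hmc
  have hrevhead : (x :: L₂).reverse.head? = some v₀'' := by
    rw [List.head?_reverse]; exact hmlast
  have hreveq : (x :: L₂).reverse = l₂'' :=
    lift_unique q hq _ l₂'' hrevc c2' (hrevhead.trans hh2'.symm)
      (by rw [List.map_reverse, hmmap, List.reverse_reverse])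
  have : (x :: L₂).reverse.getLast? = some y := by rw [hreveq]; exact hl2'
  rw [List.getLast?_reverse] at this
  simpa using this

end Corr

/-- The universal triangular cover of a connected graph is unique up to isomorphism. -/
theorem universal_cover_unique {V' V'' V : Type*} {G' : SimpleGraph V'}
    {G'' : SimpleGraph V''} {G : SimpleGraph V}
    (p : G' →g G) (hp : IsTriangularCover p) (hsc' : TriSimplyConnected G')
    (q : G'' →g G) (hq : IsTriangularCover q) (hsc'' : TriSimplyConnected G'') :
    Nonempty (G' ≃g G'') := by
  classical
  obtain ⟨v₀'⟩ := hp.connDom.nonempty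
  obtain ⟨v₀'', hb⟩ := cover_surj q hq (p v₀')
  have hb' : p v₀' = q v₀'' := hb.symm
  have total : ∀ v, ∃ x, Corr G' G'' p q v₀' v₀'' v x := corr_total p q hp.connDom hq hb
  have total' : ∀ x, ∃ v, Corr G'' G' q p v₀'' v₀' x v := corr_total q p hq.connDom hp hb'
  choose f hf using total
  choose g hg using total'
  have funct : ∀ {v x y}, Corr G' G'' (⇑p) (⇑q) v₀' v₀'' v x →
      Corr G' G'' (⇑p) (⇑q) v₀' v₀'' v y → x = y :=
    fun h1 h2 => corr_funct p q hq hsc' hb h1 h2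
  have funct' : ∀ {xx vv uu}, Corr G'' G' (⇑q) (⇑p) v₀'' v₀' xx vv →
      Corr G'' G' (⇑q) (⇑p) v₀'' v₀' xx uu → vv = uu :=
    fun h1 h2 => corr_funct q p hp hsc'' hb' h1 h2
  have linv : Function.LeftInverse g f := fun v => funct' (hg (f v)) (corr_swap (hf v))
  have rinv : Function.RightInverse g f := fun x => funct (hf (g x)) (corr_swap (hg x))
  refine ⟨⟨⟨f, g, linv, rinv⟩, ?_⟩⟩
  intro a b
  constructor
  · intro h
    obtain ⟨u, hau, hcu⟩ := corr_adj q p hp h (corr_swap (hf a))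
    have : u = b := funct' hcu (corr_swap (hf b))
    exact this ▸ hau
  · intro h
    obtain ⟨y, hxy, hcy⟩ := corr_adj p q hq h (hf a)
    have hy : y = f b := funct hcy (hf b)
    show G''.Adj (f a) (f b)
    exact hy ▸ hxy
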